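/- arXiv:1906.05208 — 2 statements merged into one kernel-verified Lean document; each statement's English description precedes it below -/
import Mathlib

section
/- For all real numbers p, q with 0 ≤ p ≤ 1 and 0 ≤ q ≤ 1 (and with both p,q strictly between 0 and 1 so the divergence is finite), the Kullback-Leibler divergence satisfies D(p‖q) ≥ (p−q)²/(2·max(p,q)) + (p−q)²/(2·max(1−p,1−q)). -/
private lemma aux_A {r : ℝ} (h0 : 0 < r) (h1 : r ≤ 1) :
    1 - r + (1 - r) ^ 2 / 2 ≤ -Real.log r := by
  rcases eq_or_lt_of_le h1 with rfl | hlt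
  · simp
  · set f : ℝ → ℝ := fun x => -Real.log x - (1 - x) - (1 - x) ^ 2 / 2 with hf
    have hderiv : ∀ x ∈ Set.Ioo r 1, HasDerivAt f (2 - x - x⁻¹) x := by
      intro x hx
      have hx0 : (0:ℝ) < x := lt_trans h0 hx.1
      have d1 : HasDerivAt (fun x : ℝ => -Real.log x) (-x⁻¹) x :=
        (Real.hasDerivAt_log (ne_of_gt hx0)).neg
      have d2 : HasDerivAt (fun x : ℝ => (1 - x)) (-1) x := by
        simpa using (hasDerivAt_id x).const_sub 1
      have d3 : HasDerivAt (fun x : ℝ => (1 - x) ^ 2 / 2) ((2 * (1 - x) ^ 1 * (-1)) / 2) x :=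
        (d2.pow 2).div_const 2
      have := (d1.sub d2).sub d3
      exact this.congr_deriv (by ring)
    have hanti : AntitoneOn f (Set.Icc r 1) := by
      apply antitoneOn_of_deriv_nonpos (convex_Icc r 1)
      · apply ContinuousOn.sub
        apply ContinuousOn.sub
        · refine (Real.continuousOn_log.mono ?_).neg
          intro x hx
          simp only [Set.mem_compl_iff, Set.mem_singleton_iff]
          intro h; rw [h] at hx; exact absurd hx.1 (by linarith)
        · fun_prop
        · fun_prop
      · intro x hx
        rw [interior_Icc] at hx
        exact (hderiv x hx).differentiableAt.differentiableWithinAt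
      · intro x hx
        rw [interior_Icc] at hx
        rw [(hderiv x hx).deriv]
        have hx0 : (0:ℝ) < x := lt_trans h0 hx.1
        have he : 2 - x - x⁻¹ = -((x - 1) ^ 2 / x) := by field_simp; ring
        rw [he]
        exact neg_nonpos.2 (by positivity)
    have hle := hanti (Set.left_mem_Icc.2 h1) (Set.right_mem_Icc.2 h1) h1
    simp only [hf, Real.log_one] at hle
    linarith [hle]

private lemma aux_B {t : ℝ} (h0 : 0 < t) (h1 : t ≤ 1) :
    (1 - t) ^ 2 / 2 ≤ t * Real.log t - t + 1 := by
  rcases eq_or_lt_of_le h1 with rfl | hlt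
  · simp
  · set g : ℝ → ℝ := fun x => x * Real.log x - x + 1 - (1 - x) ^ 2 / 2 with hg
    have hderiv : ∀ x ∈ Set.Ioo t 1, HasDerivAt g (Real.log x + 1 - x) x := by
      intro x hx
      have hx0 : (0:ℝ) < x := lt_trans h0 hx.1
      have d1 : HasDerivAt (fun x : ℝ => x * Real.log x) (Real.log x + 1) x := by
        have := (hasDerivAt_id x).mul (Real.hasDerivAt_log (ne_of_gt hx0))
        exact this.congr_deriv (by simp [hx0.ne'])
      have d2 : HasDerivAt (fun x : ℝ => (1 - x)) (-1) x := by
        simpa using (hasDerivAt_id x).const_sub 1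
      have d3 : HasDerivAt (fun x : ℝ => (1 - x) ^ 2 / 2) ((2 * (1 - x) ^ 1 * (-1)) / 2) x :=
        (d2.pow 2).div_const 2
      have := ((d1.sub (hasDerivAt_id x)).add_const 1).sub d3
      exact this.congr_deriv (by ring)
    have hanti : AntitoneOn g (Set.Icc t 1) := by
      apply antitoneOn_of_deriv_nonpos (convex_Icc t 1)
      · apply ContinuousOn.sub
        apply ContinuousOn.add
        apply ContinuousOn.sub
        · refine ContinuousOn.mul (by fun_prop) (Real.continuousOn_log.mono ?_)
          intro x hx
          simp only [Set.mem_compl_iff, Set.mem_singleton_iff]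
          intro h; rw [h] at hx; exact absurd hx.1 (by linarith)
        · fun_prop
        · fun_prop
        · fun_prop
      · intro x hx
        rw [interior_Icc] at hx
        exact (hderiv x hx).differentiableAt.differentiableWithinAt
      · intro x hx
        rw [interior_Icc] at hx
        rw [(hderiv x hx).deriv]
        have hx0 : (0:ℝ) < x := lt_trans h0 hx.1
        have := Real.log_le_sub_one_of_pos hx0
        linarith
    have hle := hanti (Set.left_mem_Icc.2 h1) (Set.right_mem_Icc.2 h1) h1
    simp only [hg, Real.log_one] at hle
    linarith [hle]

private lemma aux_key {a b : ℝ} (ha : 0 < a) (hb : 0 < b) :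
    (a - b) ^ 2 / (2 * max a b) ≤ a * Real.log (a / b) - a + b := by
  rcases le_total a b with hab | hab
  · rw [max_eq_right hab]
    have ht0 : 0 < a / b := div_pos ha hb
    have ht1 : a / b ≤ 1 := (div_le_one hb).2 hab
    have hB := aux_B ht0 ht1
    have hlog : Real.log (a / b) = Real.log (a / b) := rfl
    have hmul := mul_le_mul_of_nonneg_left hB (le_of_lt hb)
    have e1 : b * ((a / b) * Real.log (a / b) - a / b + 1) = a * Real.log (a / b) - a + b := by
      field_simp
    have e2 : b * ((1 - a / b) ^ 2 / 2) = (a - b) ^ 2 / (2 * b) := by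
      field_simp
      ring
    rw [e1, e2] at hmul
    exact hmul
  · rw [max_eq_left hab]
    have hr0 : 0 < b / a := div_pos hb ha
    have hr1 : b / a ≤ 1 := (div_le_one ha).2 hab
    have hA := aux_A hr0 hr1
    have hlog : Real.log (a / b) = -Real.log (b / a) := by
      rw [← Real.log_inv, inv_div]
    have hmul := mul_le_mul_of_nonneg_left hA (le_of_lt ha)
    rw [← hlog] at hmul
    have e1 : a * (1 - b / a + (1 - b / a) ^ 2 / 2) = (a - b) + (a - b) ^ 2 / (2 * a) := by
      field_simp
    rw [e1] at hmul
    linarith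

/-- Fact: lower bound on the Bernoulli Kullback-Leibler divergence
`D(p‖q) = p·ln(p/q) + (1−p)·ln((1−p)/(1−q))`. -/
theorem kl_div_lower_bound (p q : ℝ) (hp0 : 0 < p) (hp1 : p < 1) (hq0 : 0 < q) (hq1 : q < 1) :
    (p - q) ^ 2 / (2 * max p q) + (p - q) ^ 2 / (2 * max (1 - p) (1 - q))
      ≤ p * Real.log (p / q) + (1 - p) * Real.log ((1 - p) / (1 - q)) := by
  have h1 := aux_key hp0 hq0
  have h2 := aux_key (by linarith : (0:ℝ) < 1 - p) (by linarith : (0:ℝ) < 1 - q)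
  have e : (1 - p - (1 - q)) ^ 2 = (p - q) ^ 2 := by ring
  rw [e] at h2
  linarith
end

section
/- Let A be any event in a probability space, and let Π be uniform over a finite set of permutations. Suppose there is a map assigning to each (π, h) with h ∈ A a set P(π,h) of at least M 'swap partners' π' (each with Pr[Π = π'] = Pr[Π = π]) such that swapping takes correct outputs to incorrect outputs and Pr[H = h | Π = π] ≤ R · Pr[H = h | Π = π'] for each partner, where each π' arises from at most M' pairs. If M/(R·M') > 1 then Pr[W ∩ {output correct}] < (R·M'/M)·Pr[W ∩ {output incorrect}] for the event W that such partners exist, and hence if Pr[W] ≥ 2/3 and R·M'/M ≤ 1 then Pr[output incorrect] > 1/3. -/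
open Finset

/-- Abstract counting/likelihood-ratio lower-bound argument: if every pair
`(π, h)` in the event `W` with a correct output has at least `M` swap partners
`π'` (each incorrect, still in `W`, with likelihood ratio at most `R`), and each
`π'` arises from at most `M'` pairs, then `Pr[W ∩ correct] ≤ (R·M'/M)·Pr[W ∩ incorrect]`;
hence if `R·M' < M` and `Pr[W] ≥ 2/3` then `Pr[incorrect] > 1/3`. -/
theorem counting_lower_bound {P H : Type*} [Fintype P] [Fintype H]
    (p : P → H → ℝ) (hp0 : ∀ π h, 0 ≤ p π h) (hp1 : ∑ π : P, ∑ h : H, p π h = 1)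
    (correct : P → H → Prop) [∀ π h, Decidable (correct π h)]
    (W : P → H → Prop) [∀ π h, Decidable (W π h)]
    (Rel : P → H → P → Prop) [∀ π h π', Decidable (Rel π h π')]
    (M M' R : ℝ) (hM : 0 < M) (hM' : 0 < M') (hR : 0 < R)
    (hpartners : ∀ π h, W π h → correct π h →
      M ≤ ((Finset.univ.filter (fun π' => Rel π h π')).card : ℝ))
    (hswap : ∀ π h π', Rel π h π' →
      p π h ≤ R * p π' h ∧ ¬ correct π' h ∧ W π' h)
    (hmult : ∀ π' h,
      ((Finset.univ.filter (fun π => W π h ∧ correct π h ∧ Rel π h π')).card : ℝ) ≤ M') :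
    (∑ π : P, ∑ h : H, if W π h ∧ correct π h then p π h else 0)
        ≤ (R * M' / M) * (∑ π : P, ∑ h : H, if W π h ∧ ¬ correct π h then p π h else 0) ∧
      (R * M' < M → (2 : ℝ) / 3 ≤ (∑ π : P, ∑ h : H, if W π h then p π h else 0) →
        1 / 3 < (∑ π : P, ∑ h : H, if ¬ correct π h then p π h else 0)) := by
  classical
  set C := (∑ π : P, ∑ h : H, if W π h ∧ correct π h then p π h else 0) with hC
  set I := (∑ π : P, ∑ h : H, if W π h ∧ ¬ correct π h then p π h else 0) with hI
  have hCnn : 0 ≤ C := by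
    refine Finset.sum_nonneg fun π _ => Finset.sum_nonneg fun h _ => ?_
    split <;> simp [hp0]
  have hInn : 0 ≤ I := by
    refine Finset.sum_nonneg fun π _ => Finset.sum_nonneg fun h _ => ?_
    split <;> simp [hp0]
  set f : P → H → P → ℝ :=
    fun π h π' => if W π h ∧ correct π h ∧ Rel π h π' then R * p π' h else 0 with hf
  have hfnn : ∀ π h π', 0 ≤ f π h π' := by
    intro π h π'; rw [hf]; dsimp only
    split
    · exact mul_nonneg hR.le (hp0 _ _)
    · exact le_rfl
  have stepA : M * C ≤ ∑ π : P, ∑ h : H, ∑ π' : P, f π h π' := by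
    rw [hC, Finset.mul_sum]
    refine Finset.sum_le_sum fun π _ => ?_
    rw [Finset.mul_sum]
    refine Finset.sum_le_sum fun h _ => ?_
    by_cases hc : W π h ∧ correct π h
    · rw [if_pos hc]
      have hfe : ∀ π' : P, f π h π' = if Rel π h π' then R * p π' h else 0 := by
        intro π'; rw [hf]; dsimp only
        by_cases hr : Rel π h π' <;> simp [hr, hc.1, hc.2]
      calc M * p π h
          ≤ ((Finset.univ.filter (fun π' => Rel π h π')).card : ℝ) * p π h :=
            mul_le_mul_of_nonneg_right (hpartners π h hc.1 hc.2) (hp0 π h)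
        _ = ∑ π' ∈ Finset.univ.filter (fun π' => Rel π h π'), p π h := by
            rw [Finset.sum_const, nsmul_eq_mul]
        _ ≤ ∑ π' ∈ Finset.univ.filter (fun π' => Rel π h π'), R * p π' h := by
            refine Finset.sum_le_sum fun π' hπ' => ?_
            exact (hswap π h π' (Finset.mem_filter.mp hπ').2).1
        _ = ∑ π' : P, f π h π' := by
            rw [Finset.sum_filter]
            exact Finset.sum_congr rfl fun π' _ => (hfe π').symm
    · rw [if_neg hc, mul_zero]
      exact Finset.sum_nonneg fun π' _ => hfnn π h π'
  have swapped : (∑ π : P, ∑ h : H, ∑ π' : P, f π h π')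
      = ∑ π' : P, ∑ h : H, ∑ π : P, f π h π' := by
    calc (∑ π : P, ∑ h : H, ∑ π' : P, f π h π')
        = ∑ h : H, ∑ π : P, ∑ π' : P, f π h π' := Finset.sum_comm
      _ = ∑ h : H, ∑ π' : P, ∑ π : P, f π h π' :=
          Finset.sum_congr rfl fun h _ => Finset.sum_comm
      _ = ∑ π' : P, ∑ h : H, ∑ π : P, f π h π' := Finset.sum_comm
  have stepB : (∑ π' : P, ∑ h : H, ∑ π : P, f π h π') ≤ R * M' * I := by
    have hrhs : R * M' * I
        = ∑ π' : P, ∑ h : H, if W π' h ∧ ¬ correct π' h then R * M' * p π' h else 0 := by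
      rw [hI, Finset.mul_sum]
      refine Finset.sum_congr rfl fun π' _ => ?_
      rw [Finset.mul_sum]
      refine Finset.sum_congr rfl fun h _ => ?_
      rw [mul_ite, mul_zero]
    rw [hrhs]
    refine Finset.sum_le_sum fun π' _ => Finset.sum_le_sum fun h _ => ?_
    have hinner : (∑ π : P, f π h π')
        = ((Finset.univ.filter (fun π => W π h ∧ correct π h ∧ Rel π h π')).card : ℝ)
          * (R * p π' h) := by
      rw [hf]; dsimp only
      rw [← Finset.sum_filter, Finset.sum_const, nsmul_eq_mul]
    rw [hinner]
    by_cases hne : (Finset.univ.filter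
        (fun π => W π h ∧ correct π h ∧ Rel π h π')).Nonempty
    · obtain ⟨π0, hπ0⟩ := hne
      obtain ⟨_, _, hrel⟩ := (Finset.mem_filter.mp hπ0).2
      obtain ⟨_, hnc, hw⟩ := hswap π0 h π' hrel
      rw [if_pos ⟨hw, hnc⟩]
      calc ((Finset.univ.filter (fun π => W π h ∧ correct π h ∧ Rel π h π')).card : ℝ)
            * (R * p π' h)
          ≤ M' * (R * p π' h) :=
            mul_le_mul_of_nonneg_right (hmult π' h) (mul_nonneg hR.le (hp0 _ _))
        _ = R * M' * p π' h := by ring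
    · rw [Finset.not_nonempty_iff_eq_empty] at hne
      rw [hne]
      simp only [Finset.card_empty, Nat.cast_zero, zero_mul]
      split
      · exact mul_nonneg (mul_nonneg hR.le hM'.le) (hp0 _ _)
      · exact le_rfl
  have key : M * C ≤ R * M' * I := by
    calc M * C ≤ ∑ π : P, ∑ h : H, ∑ π' : P, f π h π' := stepA
      _ = ∑ π' : P, ∑ h : H, ∑ π : P, f π h π' := swapped
      _ ≤ R * M' * I := stepB
  have main : C ≤ R * M' / M * I := by
    rw [div_mul_eq_mul_div, le_div_iff₀ hM]
    nlinarith [key]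
  refine ⟨main, fun hlt hW => ?_⟩
  have hWsum : (∑ π : P, ∑ h : H, if W π h then p π h else 0) = C + I := by
    rw [hC, hI, ← Finset.sum_add_distrib]
    refine Finset.sum_congr rfl fun π _ => ?_
    rw [← Finset.sum_add_distrib]
    refine Finset.sum_congr rfl fun h _ => ?_
    by_cases hw : W π h <;> by_cases hc : correct π h <;> simp [hw, hc]
  rw [hWsum] at hW
  have hIle : I ≤ ∑ π : P, ∑ h : H, if ¬ correct π h then p π h else 0 := by
    rw [hI]
    refine Finset.sum_le_sum fun π _ => Finset.sum_le_sum fun h _ => ?_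
    by_cases hw : W π h <;> by_cases hc : correct π h <;> simp [hw, hc, hp0]
  have hr0 : 0 ≤ R * M' / M := by positivity
  have hr1 : R * M' / M < 1 := (div_lt_one hM).mpr hlt
  by_contra hcon
  push_neg at hcon
  have hI13 : I ≤ 1 / 3 := le_trans hIle hcon
  have h1 : R * M' / M * I ≤ R * M' / M * (1 / 3) :=
    mul_le_mul_of_nonneg_left hI13 hr0
  have h2 : R * M' / M * (1 / 3) < 1 * (1 / 3) :=
    mul_lt_mul_of_pos_right hr1 (by norm_num)
  linarith
end
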